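/- Let V = (V₁,V₂) have Laplace transform L(t₁,t₂) = (1+2t₂)^{−1/2} ∏_{j=1}^{8}(1+2t₁+2t₂+4(1−ρ_j²)t₁t₂)^{−1/2}. Then E[V₁V₂] = 72 + 2Σ_{j=1}^{8} ρ_j², and consequently cor[V₁,V₂] = (√2/12)·Σ_{j=1}^{8} ρ_j². -/

import Mathlib

open MeasureTheory

namespace Vmm
open MeasureTheory Filter Real Finset Topology

lemma key {Ω : Type*} [MeasurableSpace Ω] (μ : Measure Ω) [IsProbabilityMeasure μ]
    (f : ℕ → Ω → ℝ) (H : Ω → ℝ) (c : ℝ)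
    (hfm : ∀ n, Measurable (f n)) (hHm : Measurable H)
    (h0 : ∀ n ω, 0 ≤ f n ω) (hle : ∀ n ω, f n ω ≤ H ω)
    (hbd : ∀ n, ∃ C : ℝ, ∀ ω, f n ω ≤ C)
    (htend : ∀ ω, Tendsto (fun n => f n ω) atTop (𝓝 (H ω)))
    (hint : Tendsto (fun n => ∫ ω, f n ω ∂μ) atTop (𝓝 c)) :
    ∫ ω, H ω ∂μ = c := by
  have hfint : ∀ n, Integrable (f n) μ := by
    intro n
    obtain ⟨C, hC⟩ := hbd n
    refine (integrable_const C).mono' (hfm n).aestronglyMeasurable ?_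
    filter_upwards with ω
    rw [Real.norm_eq_abs, abs_of_nonneg (h0 n ω)]
    exact hC ω
  have hH0 : ∀ ω, 0 ≤ H ω := fun ω => le_trans (h0 0 ω) (hle 0 ω)
  -- lintegral bound
  have hlim : ∫⁻ ω, ENNReal.ofReal (H ω) ∂μ ≤ ENNReal.ofReal c := by
    have h1 : ∫⁻ ω, ENNReal.ofReal (H ω) ∂μ
        ≤ liminf (fun n => ∫⁻ ω, ENNReal.ofReal (f n ω) ∂μ) atTop := by
      have := lintegral_liminf_le (μ := μ) (u := atTop) (f := fun n ω => ENNReal.ofReal (f n ω))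
        (fun n => (hfm n).ennreal_ofReal)
      refine le_trans (le_of_eq ?_) this
      apply lintegral_congr
      intro ω
      exact (Tendsto.liminf_eq ((ENNReal.continuous_ofReal.tendsto _).comp (htend ω))).symm
    have h2 : ∀ n, ∫⁻ ω, ENNReal.ofReal (f n ω) ∂μ = ENNReal.ofReal (∫ ω, f n ω ∂μ) :=
      fun n => (ofReal_integral_eq_lintegral_ofReal (hfint n)
        (Eventually.of_forall (h0 n))).symm
    calc ∫⁻ ω, ENNReal.ofReal (H ω) ∂μ
        ≤ liminf (fun n => ∫⁻ ω, ENNReal.ofReal (f n ω) ∂μ) atTop := h1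
      _ = ENNReal.ofReal c := by
          simp_rw [h2]
          exact Tendsto.liminf_eq ((ENNReal.continuous_ofReal.tendsto _).comp hint)
  have hHint : Integrable H μ := by
    refine ⟨hHm.aestronglyMeasurable, ?_⟩
    rw [hasFiniteIntegral_iff_norm]
    have : ∫⁻ ω, ENNReal.ofReal ‖H ω‖ ∂μ = ∫⁻ ω, ENNReal.ofReal (H ω) ∂μ := by
      apply lintegral_congr; intro ω
      rw [Real.norm_eq_abs, abs_of_nonneg (hH0 ω)]
    rw [this]
    exact lt_of_le_of_lt hlim ENNReal.ofReal_lt_top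
  have hDCT : Tendsto (fun n => ∫ ω, f n ω ∂μ) atTop (𝓝 (∫ ω, H ω ∂μ)) := by
    refine tendsto_integral_of_dominated_convergence H
      (fun n => (hfm n).aestronglyMeasurable) hHint ?_ ?_
    · intro n
      filter_upwards with ω
      rw [Real.norm_eq_abs, abs_of_nonneg (h0 n ω)]
      exact hle n ω
    · filter_upwards with ω; exact htend ω
  exact tendsto_nhds_unique hDCT hint

noncomputable section
def u (n : ℕ) : ℝ := 1 / (n + 1)

lemma u_pos (n : ℕ) : 0 < u n := by unfold u; positivity

lemma u_tendsto : Tendsto u atTop (𝓝[>] (0:ℝ)) := by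
  apply tendsto_nhdsWithin_of_tendsto_nhds_of_eventually_within
  · exact tendsto_one_div_add_atTop_nhds_zero_nat
  · exact Eventually.of_forall fun n => u_pos n

lemma seq_comp {c : ℝ} {φ : ℝ → ℝ} (h : Tendsto φ (𝓝[>] (0:ℝ)) (𝓝 c)) :
    Tendsto (fun n => φ (u n)) atTop (𝓝 c) := h.comp u_tendsto

lemma slope_lim' {F : ℝ → ℝ} {d : ℝ} (hF : HasDerivAt F d 0) (hF0 : F 0 = 1) :
    Tendsto (fun t => (1 - F t) / t) (𝓝[>] (0:ℝ)) (𝓝 (-d)) := by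
  have h := hasDerivAt_iff_tendsto_slope.mp hF
  have h2 : Tendsto (slope F 0) (𝓝[>] (0:ℝ)) (𝓝 d) :=
    h.mono_left (nhdsWithin_mono _ (fun x hx => ne_of_gt hx))
  have h3 := h2.neg
  refine h3.congr (fun t => ?_)
  simp [slope_def_field, hF0, div_eq_div_iff]
  ring

lemma slope_lim {F : ℝ → ℝ} {d : ℝ} (hF : HasDerivAt F d 0) (hF0 : F 0 = 1) :
    Tendsto (fun n : ℕ => (1 - F (u n)) * (n + 1)) atTop (𝓝 (-d)) := by
  refine (seq_comp (slope_lim' hF hF0)).congr (fun n => ?_)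
  unfold u
  rw [div_div_eq_mul_div, div_one]

lemma second_lim' {G G' : ℝ → ℝ} {d : ℝ}
    (hG : ∀ t ∈ Set.Ioo (-(1:ℝ)/8) (1/8), HasDerivAt G (G' t) t)
    (hG0 : G 0 = 0) (hG'0 : G' 0 = 0) (hG'' : HasDerivAt G' d 0) :
    Tendsto (fun t => G t / t ^ 2) (𝓝[>] (0:ℝ)) (𝓝 (d/2)) := by
  have hmem : ∀ t ∈ Set.Ioo (0:ℝ) (1/8), t ∈ Set.Ioo (-(1:ℝ)/8) (1/8) := by
    intro t ht; exact ⟨by linarith [ht.1], ht.2⟩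
  refine HasDerivAt.lhopital_zero_right_on_Ioo (f := G) (f' := G') (g := fun t => t ^ 2)
    (g' := fun t => 2 * t) (by norm_num) (fun x hx => hG x (hmem x hx))
    (fun x hx => ?_) (fun x hx => by have := hx.1; positivity) ?_ ?_ ?_
  · simpa using (hasDerivAt_pow 2 x)
  · have h : ContinuousAt G 0 := (hG 0 (by norm_num)).continuousAt
    have h2 : Tendsto G (𝓝[>] (0:ℝ)) (𝓝 (G 0)) := h.tendsto.mono_left nhdsWithin_le_nhds
    rwa [hG0] at h2
  · have : Tendsto (fun t : ℝ => t ^ 2) (𝓝[>] (0:ℝ)) (𝓝 (0 ^ 2)) :=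
      ((continuous_pow 2).tendsto 0).mono_left nhdsWithin_le_nhds
    simpa using this
  · have h := hasDerivAt_iff_tendsto_slope.mp hG''
    have h2 : Tendsto (slope G' 0) (𝓝[>] (0:ℝ)) (𝓝 d) :=
      h.mono_left (nhdsWithin_mono _ (fun x hx => ne_of_gt hx))
    have h3 := h2.div_const 2
    refine h3.congr (fun t => ?_)
    rw [slope_def_field, hG'0]
    field_simp
    ring

lemma second_lim {G G' : ℝ → ℝ} {d : ℝ}
    (hG : ∀ t ∈ Set.Ioo (-(1:ℝ)/8) (1/8), HasDerivAt G (G' t) t)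
    (hG0 : G 0 = 0) (hG'0 : G' 0 = 0) (hG'' : HasDerivAt G' d 0) :
    Tendsto (fun n : ℕ => G (u n) * (n + 1) ^ 2) atTop (𝓝 (d/2)) := by
  refine (seq_comp (second_lim' hG hG0 hG'0 hG'')).congr (fun n => ?_)
  unfold u
  rw [div_pow, one_pow, div_div_eq_mul_div, div_one]

noncomputable section

def q (a t : ℝ) : ℝ := 1 + 4*t + 4*a*t^2
def F1 (t : ℝ) : ℝ := exp (Real.log (1+2*t) * (-4))
def F2 (t : ℝ) : ℝ := exp (Real.log (1+2*t) * (-9/2))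
def K1 (t : ℝ) : ℝ := exp (Real.log (1+4*t) * (-4))
def K2 (t : ℝ) : ℝ := exp (Real.log (1+4*t) * (-9/2))
def F3 (a : Fin 8 → ℝ) (t : ℝ) : ℝ :=
  exp (Real.log (1+2*t) * (-(1/2)) + ∑ j, Real.log (q (a j) t) * (-(1/2)))

def F1' (t : ℝ) : ℝ := F1 t * (2/(1+2*t) * (-4))
def F2' (t : ℝ) : ℝ := F2 t * (2/(1+2*t) * (-9/2))
def K1' (t : ℝ) : ℝ := K1 t * (4/(1+4*t) * (-4))
def K2' (t : ℝ) : ℝ := K2 t * (4/(1+4*t) * (-9/2))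
def m (a : Fin 8 → ℝ) (t : ℝ) : ℝ :=
  2/(1+2*t) * (-(1/2)) + ∑ j, (4+8*(a j)*t)/(q (a j) t) * (-(1/2))
def F3' (a : Fin 8 → ℝ) (t : ℝ) : ℝ := F3 a t * m a t

def Sdom : Set ℝ := Set.Ioo (-(1:ℝ)/8) (1/8)

lemma pos2 {t : ℝ} (ht : t ∈ Sdom) : 0 < 1+2*t := by
  have := ht.1; have := ht.2; simp [Sdom] at *; linarith
lemma pos4 {t : ℝ} (ht : t ∈ Sdom) : 0 < 1+4*t := by
  have := ht.1; have := ht.2; simp [Sdom] at *; linarith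
lemma posq {a t : ℝ} (ha : 0 ≤ a) (ht : t ∈ Sdom) : 0 < q a t := by
  obtain ⟨h1, h2⟩ := ht; simp [Sdom] at *
  have : 0 ≤ 4*a*t^2 := by positivity
  unfold q; nlinarith

lemma hd12 (t : ℝ) : HasDerivAt (fun t : ℝ => 1+2*t) 2 t := by
  simpa using ((hasDerivAt_id t).const_mul (2:ℝ)).const_add 1
lemma hd14 (t : ℝ) : HasDerivAt (fun t : ℝ => 1+4*t) 4 t := by
  simpa using ((hasDerivAt_id t).const_mul (4:ℝ)).const_add 1
lemma hdq (a t : ℝ) : HasDerivAt (q a) (4+8*a*t) t := by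
  have h1 : HasDerivAt (fun t : ℝ => 4*a*t^2) (4*a*(2*t)) t := by
    simpa using (hasDerivAt_pow 2 t).const_mul (4*a)
  have := (hd14 t).add h1
  refine this.congr_deriv ?_; ring

lemma hdlog2 {t : ℝ} (ht : t ∈ Sdom) :
    HasDerivAt (fun t : ℝ => Real.log (1+2*t)) (2/(1+2*t)) t := (hd12 t).log (pos2 ht).ne'
lemma hdlog4 {t : ℝ} (ht : t ∈ Sdom) :
    HasDerivAt (fun t : ℝ => Real.log (1+4*t)) (4/(1+4*t)) t := (hd14 t).log (pos4 ht).ne'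
lemma hdlogq {a t : ℝ} (ha : 0 ≤ a) (ht : t ∈ Sdom) :
    HasDerivAt (fun t : ℝ => Real.log (q a t)) ((4+8*a*t)/(q a t)) t :=
  (hdq a t).log (posq ha ht).ne'

lemma hdF1 {t : ℝ} (ht : t ∈ Sdom) : HasDerivAt F1 (F1' t) t :=
  ((hdlog2 ht).mul_const (-4)).exp
lemma hdF2 {t : ℝ} (ht : t ∈ Sdom) : HasDerivAt F2 (F2' t) t :=
  ((hdlog2 ht).mul_const (-9/2)).exp
lemma hdK1 {t : ℝ} (ht : t ∈ Sdom) : HasDerivAt K1 (K1' t) t :=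
  ((hdlog4 ht).mul_const (-4)).exp
lemma hdK2 {t : ℝ} (ht : t ∈ Sdom) : HasDerivAt K2 (K2' t) t :=
  ((hdlog4 ht).mul_const (-9/2)).exp
lemma hdF3 {a : Fin 8 → ℝ} (ha : ∀ j, 0 ≤ a j) {t : ℝ} (ht : t ∈ Sdom) :
    HasDerivAt (F3 a) (F3' a t) t := by
  have hsum : HasDerivAt (fun t : ℝ => ∑ j, Real.log (q (a j) t) * (-(1/2)))
      (∑ j, (4+8*(a j)*t)/(q (a j) t) * (-(1/2))) t :=
    HasDerivAt.fun_sum (fun j _ => ((hdlogq (ha j) ht)).mul_const _)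
  exact (((hdlog2 ht).mul_const (-(1/2))).add hsum).exp

-- values at 0
lemma zero_mem : (0:ℝ) ∈ Sdom := by constructor <;> norm_num

lemma F1_0 : F1 0 = 1 := by simp [F1]
lemma F2_0 : F2 0 = 1 := by simp [F2]
lemma K1_0 : K1 0 = 1 := by simp [K1]
lemma K2_0 : K2 0 = 1 := by simp [K2]
lemma q_0 (a : ℝ) : q a 0 = 1 := by simp [q]
lemma F3_0 (a : Fin 8 → ℝ) : F3 a 0 = 1 := by simp [F3, q_0]
lemma F1'_0 : F1' 0 = -8 := by simp [F1', F1_0]; norm_num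
lemma F2'_0 : F2' 0 = -9 := by simp [F2', F2_0]; norm_num
lemma K1'_0 : K1' 0 = -16 := by simp [K1', K1_0]; norm_num
lemma K2'_0 : K2' 0 = -18 := by simp [K2', K2_0]; norm_num
lemma m_0 (a : Fin 8 → ℝ) : m a 0 = -17 := by
  simp [m, q_0]; norm_num
lemma F3'_0 (a : Fin 8 → ℝ) : F3' a 0 = -17 := by simp [F3', F3_0, m_0]

-- second derivatives at 0
lemma hdw2 (c : ℝ) : HasDerivAt (fun t : ℝ => 2/(1+2*t) * c) (-4*c) 0 := by
  have h : HasDerivAt (fun t : ℝ => 2/(1+2*t)) ((0 * (1+2*0) - 2*2)/(1+2*0)^2) 0 :=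
    (hasDerivAt_const 0 (2:ℝ)).div (hd12 0) (by norm_num)
  have := h.mul_const c
  refine this.congr_deriv ?_; norm_num
lemma hdw4 (c : ℝ) : HasDerivAt (fun t : ℝ => 4/(1+4*t) * c) (-16*c) 0 := by
  have h : HasDerivAt (fun t : ℝ => 4/(1+4*t)) ((0 * (1+4*0) - 4*4)/(1+4*0)^2) 0 :=
    (hasDerivAt_const 0 (4:ℝ)).div (hd14 0) (by norm_num)
  have := h.mul_const c
  refine this.congr_deriv ?_; norm_num

lemma hdF1' : HasDerivAt F1' 80 0 := by
  have := (hdF1 zero_mem).mul (hdw2 (-4))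
  refine this.congr_deriv ?_
  rw [F1'_0, F1_0]; norm_num
lemma hdF2' : HasDerivAt F2' 99 0 := by
  have := (hdF2 zero_mem).mul (hdw2 (-9/2))
  refine this.congr_deriv ?_
  rw [F2'_0, F2_0]; norm_num
lemma hdK1' : HasDerivAt K1' 320 0 := by
  have := (hdK1 zero_mem).mul (hdw4 (-4))
  refine this.congr_deriv ?_
  rw [K1'_0, K1_0]; norm_num
lemma hdK2' : HasDerivAt K2' 396 0 := by
  have := (hdK2 zero_mem).mul (hdw4 (-9/2))
  refine this.congr_deriv ?_
  rw [K2'_0, K2_0]; norm_num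

lemma hdm (a : Fin 8 → ℝ) (ha : ∀ j, 0 ≤ a j) :
    HasDerivAt (m a) (66 - 4*∑ j, a j) 0 := by
  have hterm : ∀ j : Fin 8, HasDerivAt (fun t : ℝ => (4+8*(a j)*t)/(q (a j) t) * (-(1/2)))
      ((8 - 4 * a j)) 0 := by
    intro j
    have hnum : HasDerivAt (fun t : ℝ => 4+8*(a j)*t) (8*(a j)) 0 := by
      simpa using ((hasDerivAt_id (0:ℝ)).const_mul (8*(a j))).const_add 4
    have h := (hnum.div (hdq (a j) 0) (by rw [q_0]; norm_num)).mul_const (-(1/2))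
    refine h.congr_deriv ?_
    rw [q_0]; norm_num; ring
  have hsum : HasDerivAt (fun t : ℝ => ∑ j, (4+8*(a j)*t)/(q (a j) t) * (-(1/2)))
      (∑ j : Fin 8, (8 - 4 * a j)) 0 := HasDerivAt.fun_sum (fun j _ => hterm j)
  have h := (hdw2 (-(1/2))).add hsum
  refine h.congr_deriv ?_
  rw [Finset.sum_sub_distrib, ← Finset.mul_sum]
  simp; ring
lemma hdF3' (a : Fin 8 → ℝ) (ha : ∀ j, 0 ≤ a j) :
    HasDerivAt (F3' a) (355 - 4*∑ j, a j) 0 := by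
  have := (hdF3 ha zero_mem).mul (hdm a ha)
  refine this.congr_deriv ?_
  rw [F3'_0, F3_0, m_0]; ring

lemma pow8 {x : ℝ} (hx : 0 < x) :
    ∏ _j : Fin 8, x ^ (-(1:ℝ)/2) = exp (Real.log x * (-4)) := by
  rw [Finset.prod_const, Finset.card_univ, Fintype.card_fin,
    ← Real.rpow_natCast (x ^ (-(1:ℝ)/2)) 8, ← Real.rpow_mul hx.le,
    Real.rpow_def_of_pos hx]
  norm_num

lemma rhs1 (ρ : Fin 8 → ℝ) {t : ℝ} (ht : 0 ≤ t) :
    (1 + 2*(0:ℝ)) ^ (-(1:ℝ)/2)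
      * ∏ j, (1 + 2*t + 2*(0:ℝ) + 4*(1-ρ j^2)*t*0) ^ (-(1:ℝ)/2) = F1 t := by
  have h2 : (0:ℝ) < 1 + 2*t := by linarith
  have heq : ∀ j ∈ Finset.univ, ((1:ℝ) + 2*t + 2*(0:ℝ) + 4*(1-ρ j^2)*t*0) ^ (-(1:ℝ)/2)
      = (1+2*t) ^ (-(1:ℝ)/2) := by intro j _; ring_nf
  rw [Finset.prod_congr rfl heq, pow8 h2]
  norm_num [F1]

lemma rhs2 (ρ : Fin 8 → ℝ) {t : ℝ} (ht : 0 ≤ t) :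
    (1 + 2*t) ^ (-(1:ℝ)/2)
      * ∏ j, (1 + 2*(0:ℝ) + 2*t + 4*(1-ρ j^2)*0*t) ^ (-(1:ℝ)/2) = F2 t := by
  have h2 : (0:ℝ) < 1 + 2*t := by linarith
  have heq : ∀ j ∈ Finset.univ, ((1:ℝ) + 2*(0:ℝ) + 2*t + 4*(1-ρ j^2)*0*t) ^ (-(1:ℝ)/2)
      = (1+2*t) ^ (-(1:ℝ)/2) := by intro j _; ring_nf
  rw [Finset.prod_congr rfl heq, pow8 h2, Real.rpow_def_of_pos h2, ← Real.exp_add, F2]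
  ring_nf

lemma rhs1' (ρ : Fin 8 → ℝ) {t : ℝ} (ht : 0 ≤ t) :
    (1 + 2*(0:ℝ)) ^ (-(1:ℝ)/2)
      * ∏ j, (1 + 2*(2*t) + 2*(0:ℝ) + 4*(1-ρ j^2)*(2*t)*0) ^ (-(1:ℝ)/2) = K1 t := by
  have h2 : (0:ℝ) < 1 + 4*t := by linarith
  have heq : ∀ j ∈ Finset.univ, ((1:ℝ) + 2*(2*t) + 2*(0:ℝ) + 4*(1-ρ j^2)*(2*t)*0) ^ (-(1:ℝ)/2)
      = (1+4*t) ^ (-(1:ℝ)/2) := by intro j _; ring_nf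
  rw [Finset.prod_congr rfl heq, pow8 h2]
  norm_num [K1]

lemma rhs2' (ρ : Fin 8 → ℝ) {t : ℝ} (ht : 0 ≤ t) :
    (1 + 2*(2*t)) ^ (-(1:ℝ)/2)
      * ∏ j, (1 + 2*(0:ℝ) + 2*(2*t) + 4*(1-ρ j^2)*0*(2*t)) ^ (-(1:ℝ)/2) = K2 t := by
  have h2 : (0:ℝ) < 1 + 4*t := by linarith
  have heq : ∀ j ∈ Finset.univ, ((1:ℝ) + 2*(0:ℝ) + 2*(2*t) + 4*(1-ρ j^2)*0*(2*t)) ^ (-(1:ℝ)/2)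
      = (1+4*t) ^ (-(1:ℝ)/2) := by intro j _; ring_nf
  have h22 : (1:ℝ) + 2*(2*t) = 1 + 4*t := by ring
  rw [Finset.prod_congr rfl heq, pow8 h2, h22, Real.rpow_def_of_pos h2, ← Real.exp_add, K2]
  ring_nf

lemma rhs3 (ρ : Fin 8 → ℝ) (hρ : ∀ j, ρ j ∈ Set.Icc (0:ℝ) 1) {t : ℝ} (ht : 0 ≤ t) :
    (1 + 2*t) ^ (-(1:ℝ)/2)
      * ∏ j, (1 + 2*t + 2*t + 4*(1-ρ j^2)*t*t) ^ (-(1:ℝ)/2)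
      = F3 (fun j => 1 - ρ j^2) t := by
  have h2 : (0:ℝ) < 1 + 2*t := by linarith
  have hq : ∀ j : Fin 8, (0:ℝ) < q (1 - ρ j^2) t := by
    intro j
    have h1 := (hρ j).1; have h2 := (hρ j).2
    have : (0:ℝ) ≤ 1 - ρ j^2 := by nlinarith
    unfold q; nlinarith [sq_nonneg t]
  have heq : ∀ j ∈ Finset.univ, ((1:ℝ) + 2*t + 2*t + 4*(1-ρ j^2)*t*t) ^ (-(1:ℝ)/2)
      = exp (Real.log (q (1 - ρ j^2) t) * (-(1/2))) := by
    intro j _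
    have : (1:ℝ) + 2*t + 2*t + 4*(1-ρ j^2)*t*t = q (1 - ρ j^2) t := by unfold q; ring
    rw [this, Real.rpow_def_of_pos (hq j)]
    norm_num
  rw [Finset.prod_congr rfl heq]
  rw [← Real.exp_sum, Real.rpow_def_of_pos h2, ← Real.exp_add, F3]
  norm_num

end
end
end Vmm

open Vmm Filter Topology in
/-- If `(V₁,V₂)` (nonnegative) has Laplace transform
`L(t₁,t₂) = (1+2t₂)^{−1/2} ∏_{j=1}^{8}(1+2t₁+2t₂+4(1−ρ_j²)t₁t₂)^{−1/2}`, then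
`E[V₁V₂] = 72 + 2∑_{j=1}^8 ρ_j²` and consequently
`cor[V₁,V₂] = (√2/12)·∑_{j=1}^8 ρ_j²`. -/
theorem V_mixed_moment_and_correlation {Ω : Type*} [MeasurableSpace Ω] (μ : Measure Ω)
    [IsProbabilityMeasure μ] (V₁ V₂ : Ω → ℝ) (hV₁m : Measurable V₁) (hV₂m : Measurable V₂)
    (hV₁ : ∀ ω, 0 ≤ V₁ ω) (hV₂ : ∀ ω, 0 ≤ V₂ ω)
    (ρ : Fin 8 → ℝ) (hρ : ∀ j, ρ j ∈ Set.Icc (0 : ℝ) 1)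
    (hL : ∀ t₁ t₂ : ℝ, 0 ≤ t₁ → 0 ≤ t₂ →
      ∫ ω, Real.exp (-t₁ * V₁ ω - t₂ * V₂ ω) ∂μ
        = (1 + 2 * t₂) ^ (-(1 : ℝ) / 2)
          * ∏ j, (1 + 2 * t₁ + 2 * t₂ + 4 * (1 - ρ j ^ 2) * t₁ * t₂) ^ (-(1 : ℝ) / 2)) :
    (∫ ω, V₁ ω * V₂ ω ∂μ = 72 + 2 * ∑ j, ρ j ^ 2)
    ∧ ((∫ ω, V₁ ω * V₂ ω ∂μ) - (∫ ω, V₁ ω ∂μ) * ∫ ω, V₂ ω ∂μ)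
        / Real.sqrt (((∫ ω, V₁ ω ^ 2 ∂μ) - (∫ ω, V₁ ω ∂μ) ^ 2)
            * ((∫ ω, V₂ ω ^ 2 ∂μ) - (∫ ω, V₂ ω ∂μ) ^ 2))
      = Real.sqrt 2 / 12 * ∑ j, ρ j ^ 2 := by
  have ha0 : ∀ j : Fin 8, 0 ≤ (fun j => 1 - ρ j ^ 2) j := by
    intro j
    have h1 := (hρ j).1; have h2 := (hρ j).2
    show 0 ≤ 1 - ρ j ^ 2
    nlinarith
  -- measurability of exponentials
  have mexp1 : ∀ t : ℝ, Measurable (fun ω => Real.exp (-(t * V₁ ω))) :=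
    fun t => Real.measurable_exp.comp (hV₁m.const_mul t).neg
  have mexp2 : ∀ t : ℝ, Measurable (fun ω => Real.exp (-(t * V₂ ω))) :=
    fun t => Real.measurable_exp.comp (hV₂m.const_mul t).neg
  -- integrability of exponentials
  have ibdd : ∀ g : Ω → ℝ, Measurable g → (∀ ω, ‖g ω‖ ≤ 1) → Integrable g μ := fun g hg hb =>
    (integrable_const 1).mono' hg.aestronglyMeasurable (Filter.Eventually.of_forall hb)
  have nexp1 : ∀ t : ℝ, 0 ≤ t → ∀ ω, ‖Real.exp (-(t * V₁ ω))‖ ≤ 1 := by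
    intro t ht ω
    rw [Real.norm_eq_abs, Real.abs_exp]
    exact Real.exp_le_one_iff.mpr (by nlinarith [hV₁ ω])
  have nexp2 : ∀ t : ℝ, 0 ≤ t → ∀ ω, ‖Real.exp (-(t * V₂ ω))‖ ≤ 1 := by
    intro t ht ω
    rw [Real.norm_eq_abs, Real.abs_exp]
    exact Real.exp_le_one_iff.mpr (by nlinarith [hV₂ ω])
  have iexp1 : ∀ t : ℝ, 0 ≤ t → Integrable (fun ω => Real.exp (-(t * V₁ ω))) μ :=
    fun t ht => ibdd _ (mexp1 t) (nexp1 t ht)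
  have iexp2 : ∀ t : ℝ, 0 ≤ t → Integrable (fun ω => Real.exp (-(t * V₂ ω))) μ :=
    fun t ht => ibdd _ (mexp2 t) (nexp2 t ht)
  have iexp12 : ∀ t : ℝ, 0 ≤ t →
      Integrable (fun ω => Real.exp (-(t * V₁ ω)) * Real.exp (-(t * V₂ ω))) μ := by
    intro t ht
    refine ibdd _ ((mexp1 t).mul (mexp2 t)) fun ω => ?_
    rw [norm_mul]
    exact mul_le_one₀ (nexp1 t ht ω) (norm_nonneg _) (nexp2 t ht ω)
  -- Laplace transform values
  have hA : ∀ t : ℝ, 0 ≤ t → ∫ ω, Real.exp (-(t * V₁ ω)) ∂μ = F1 t := by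
    intro t ht
    have h := hL t 0 ht le_rfl
    rw [rhs1 ρ ht] at h
    rw [← h]
    exact integral_congr_ae (Filter.Eventually.of_forall fun ω => by
      beta_reduce
      rw [show -t * V₁ ω - 0 * V₂ ω = -(t * V₁ ω) from by ring])
  have hA2 : ∀ t : ℝ, 0 ≤ t → ∫ ω, Real.exp (-(2 * t * V₁ ω)) ∂μ = K1 t := by
    intro t ht
    have h := hL (2*t) 0 (by linarith) le_rfl
    rw [rhs1' ρ ht] at h
    rw [← h]
    exact integral_congr_ae (Filter.Eventually.of_forall fun ω => by
      beta_reduce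
      rw [show -(2*t) * V₁ ω - 0 * V₂ ω = -(2 * t * V₁ ω) from by ring])
  have hB : ∀ t : ℝ, 0 ≤ t → ∫ ω, Real.exp (-(t * V₂ ω)) ∂μ = F2 t := by
    intro t ht
    have h := hL 0 t le_rfl ht
    rw [rhs2 ρ ht] at h
    rw [← h]
    exact integral_congr_ae (Filter.Eventually.of_forall fun ω => by
      beta_reduce
      rw [show -0 * V₁ ω - t * V₂ ω = -(t * V₂ ω) from by ring])
  have hB2 : ∀ t : ℝ, 0 ≤ t → ∫ ω, Real.exp (-(2 * t * V₂ ω)) ∂μ = K2 t := by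
    intro t ht
    have h := hL 0 (2*t) le_rfl (by linarith)
    rw [rhs2' ρ ht] at h
    rw [← h]
    exact integral_congr_ae (Filter.Eventually.of_forall fun ω => by
      beta_reduce
      rw [show -0 * V₁ ω - 2*t * V₂ ω = -(2 * t * V₂ ω) from by ring])
  have hC : ∀ t : ℝ, 0 ≤ t →
      ∫ ω, Real.exp (-(t * V₁ ω)) * Real.exp (-(t * V₂ ω)) ∂μ
        = F3 (fun j => 1 - ρ j ^ 2) t := by
    intro t ht
    have h := hL t t ht ht
    rw [rhs3 ρ hρ ht] at h
    rw [← h]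
    exact integral_congr_ae (Filter.Eventually.of_forall fun ω => by
      beta_reduce
      rw [← Real.exp_add, show -(t * V₁ ω) + -(t * V₂ ω) = -t * V₁ ω - t * V₂ ω from by ring])
  -- pointwise limits
  have hpt1 : ∀ ω, Tendsto (fun n : ℕ => (1 - Real.exp (-(u n * V₁ ω))) * ((n:ℝ)+1))
      atTop (𝓝 (V₁ ω)) := by
    intro ω
    have hd : HasDerivAt (fun s : ℝ => Real.exp (-(s * V₁ ω))) (-(V₁ ω)) 0 := by
      have := (((hasDerivAt_id (0:ℝ)).mul_const (V₁ ω)).neg).exp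
      simpa using this
    have := slope_lim hd (by simp)
    simpa using this
  have hpt2 : ∀ ω, Tendsto (fun n : ℕ => (1 - Real.exp (-(u n * V₂ ω))) * ((n:ℝ)+1))
      atTop (𝓝 (V₂ ω)) := by
    intro ω
    have hd : HasDerivAt (fun s : ℝ => Real.exp (-(s * V₂ ω))) (-(V₂ ω)) 0 := by
      have := (((hasDerivAt_id (0:ℝ)).mul_const (V₂ ω)).neg).exp
      simpa using this
    have := slope_lim hd (by simp)
    simpa using this
  -- factor bounds
  have hfac_nonneg : ∀ x t : ℝ, 0 ≤ x → 0 ≤ t → 0 ≤ 1 - Real.exp (-(t * x)) := by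
    intro x t hx ht
    have : Real.exp (-(t*x)) ≤ 1 := Real.exp_le_one_iff.mpr (by nlinarith)
    linarith
  have hfac_le : ∀ (x : ℝ) (n : ℕ), 0 ≤ x →
      (1 - Real.exp (-(u n * x))) * ((n:ℝ)+1) ≤ x := by
    intro x n hx
    have hu := u_pos n
    have h1 : 1 - Real.exp (-(u n * x)) ≤ u n * x := by
      nlinarith [Real.add_one_le_exp (-(u n * x))]
    have hn : (0:ℝ) ≤ (n:ℝ)+1 := by positivity
    have ht1 : u n * ((n:ℝ)+1) = 1 := by
      have : ((n:ℝ)+1) ≠ 0 := by positivity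
      unfold u; field_simp
    calc (1 - Real.exp (-(u n * x))) * ((n:ℝ)+1) ≤ (u n * x) * ((n:ℝ)+1) :=
        mul_le_mul_of_nonneg_right h1 hn
      _ = x := by rw [mul_comm (u n) x, mul_assoc, ht1, mul_one]
  have hfac_bd : ∀ (x : ℝ) (n : ℕ), 0 ≤ x →
      (1 - Real.exp (-(u n * x))) * ((n:ℝ)+1) ≤ (n:ℝ)+1 := by
    intro x n hx
    have h1 := Real.exp_pos (-(u n * x))
    have hn : (0:ℝ) ≤ (n:ℝ)+1 := by positivity
    nlinarith
  -- First moments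
  have hM1 : ∫ ω, V₁ ω ∂μ = 8 := by
    refine key μ (fun n ω => (1 - Real.exp (-(u n * V₁ ω))) * ((n:ℝ)+1)) V₁ 8
      (fun n => (measurable_const.sub (mexp1 (u n))).mul_const _) hV₁m
      (fun n ω => mul_nonneg (hfac_nonneg _ _ (hV₁ ω) (u_pos n).le) (by positivity))
      (fun n ω => hfac_le _ n (hV₁ ω))
      (fun n => ⟨(n:ℝ)+1, fun ω => hfac_bd _ n (hV₁ ω)⟩) hpt1 ?_
    have heq : ∀ n : ℕ, ∫ ω, (1 - Real.exp (-(u n * V₁ ω))) * ((n:ℝ)+1) ∂μ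
        = (1 - F1 (u n)) * ((n:ℝ)+1) := by
      intro n
      rw [integral_mul_const]
      congr 1
      rw [integral_sub (integrable_const 1) (iexp1 _ (u_pos n).le), hA _ (u_pos n).le]
      simp
    have hdd : HasDerivAt F1 (-8 : ℝ) 0 := by have := hdF1 zero_mem; rwa [F1'_0] at this
    have h := slope_lim hdd F1_0
    rw [show -(-8 : ℝ) = 8 by norm_num] at h
    exact h.congr fun n => (heq n).symm
  have hM2 : ∫ ω, V₂ ω ∂μ = 9 := by
    refine key μ (fun n ω => (1 - Real.exp (-(u n * V₂ ω))) * ((n:ℝ)+1)) V₂ 9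
      (fun n => (measurable_const.sub (mexp2 (u n))).mul_const _) hV₂m
      (fun n ω => mul_nonneg (hfac_nonneg _ _ (hV₂ ω) (u_pos n).le) (by positivity))
      (fun n ω => hfac_le _ n (hV₂ ω))
      (fun n => ⟨(n:ℝ)+1, fun ω => hfac_bd _ n (hV₂ ω)⟩) hpt2 ?_
    have heq : ∀ n : ℕ, ∫ ω, (1 - Real.exp (-(u n * V₂ ω))) * ((n:ℝ)+1) ∂μ
        = (1 - F2 (u n)) * ((n:ℝ)+1) := by
      intro n
      rw [integral_mul_const]
      congr 1
      rw [integral_sub (integrable_const 1) (iexp2 _ (u_pos n).le), hB _ (u_pos n).le]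
      simp
    have hdd : HasDerivAt F2 (-9 : ℝ) 0 := by have := hdF2 zero_mem; rwa [F2'_0] at this
    have h := slope_lim hdd F2_0
    rw [show -(-9 : ℝ) = 9 by norm_num] at h
    exact h.congr fun n => (heq n).symm
  -- Second moments
  have hM3 : ∫ ω, V₁ ω ^ 2 ∂μ = 80 := by
    refine key μ (fun n ω => ((1 - Real.exp (-(u n * V₁ ω))) * ((n:ℝ)+1)) ^ 2)
      (fun ω => V₁ ω ^ 2) 80
      (fun n => ((measurable_const.sub (mexp1 (u n))).mul_const _).pow_const 2)
      (hV₁m.pow_const 2)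
      (fun n ω => sq_nonneg _)
      (fun n ω => pow_le_pow_left₀
        (mul_nonneg (hfac_nonneg _ _ (hV₁ ω) (u_pos n).le) (by positivity))
        (hfac_le _ n (hV₁ ω)) 2)
      (fun n => ⟨((n:ℝ)+1)^2, fun ω => pow_le_pow_left₀
        (mul_nonneg (hfac_nonneg _ _ (hV₁ ω) (u_pos n).le) (by positivity))
        (hfac_bd _ n (hV₁ ω)) 2⟩)
      (fun ω => by simpa using (hpt1 ω).pow 2) ?_
    have heq : ∀ n : ℕ, ∫ ω, ((1 - Real.exp (-(u n * V₁ ω))) * ((n:ℝ)+1)) ^ 2 ∂μ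
        = (1 - 2*F1 (u n) + K1 (u n)) * ((n:ℝ)+1)^2 := by
      intro n
      have hptw : ∀ ω, ((1 - Real.exp (-(u n * V₁ ω))) * ((n:ℝ)+1)) ^ 2
          = (1 - 2*Real.exp (-(u n * V₁ ω)) + Real.exp (-(2 * u n * V₁ ω))) * ((n:ℝ)+1)^2 := by
        intro ω
        have e2 : Real.exp (-(u n * V₁ ω)) ^ 2 = Real.exp (-(2 * u n * V₁ ω)) := by
          rw [sq, ← Real.exp_add]; congr 1; ring
        linear_combination (((n:ℝ)+1)^2) * e2
      simp_rw [hptw]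
      rw [integral_mul_const]
      congr 1
      have i2 : Integrable (fun ω => 2 * Real.exp (-(u n * V₁ ω))) μ :=
        (iexp1 _ (u_pos n).le).const_mul 2
      have i3 : Integrable (fun ω => 1 - 2 * Real.exp (-(u n * V₁ ω))) μ :=
        (integrable_const 1).sub i2
      have i4 : Integrable (fun ω => Real.exp (-(2 * u n * V₁ ω))) μ :=
        iexp1 (2 * u n) (by have := u_pos n; positivity)
      rw [integral_add i3 i4, integral_sub (integrable_const 1) i2,
        integral_const_mul, hA _ (u_pos n).le, hA2 _ (u_pos n).le]
      simp
    have hG : ∀ t ∈ Set.Ioo (-(1:ℝ)/8) (1/8),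
        HasDerivAt (fun t => 1 - 2*F1 t + K1 t) (0 - 2*F1' t + K1' t) t :=
      fun t ht => ((hasDerivAt_const t 1).sub ((hdF1 ht).const_mul 2)).add (hdK1 ht)
    have hG'' : HasDerivAt (fun t => 0 - 2*F1' t + K1' t) (160:ℝ) 0 := by
      have := ((hasDerivAt_const (0:ℝ) 0).sub (hdF1'.const_mul 2)).add hdK1'
      refine this.congr_deriv ?_
      norm_num
    have hlim := second_lim hG (by norm_num [F1_0, K1_0]) (by norm_num [F1'_0, K1'_0]) hG''
    rw [show (160:ℝ)/2 = 80 by norm_num] at hlim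
    exact hlim.congr fun n => (heq n).symm
  have hM4 : ∫ ω, V₂ ω ^ 2 ∂μ = 99 := by
    refine key μ (fun n ω => ((1 - Real.exp (-(u n * V₂ ω))) * ((n:ℝ)+1)) ^ 2)
      (fun ω => V₂ ω ^ 2) 99
      (fun n => ((measurable_const.sub (mexp2 (u n))).mul_const _).pow_const 2)
      (hV₂m.pow_const 2)
      (fun n ω => sq_nonneg _)
      (fun n ω => pow_le_pow_left₀
        (mul_nonneg (hfac_nonneg _ _ (hV₂ ω) (u_pos n).le) (by positivity))
        (hfac_le _ n (hV₂ ω)) 2)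
      (fun n => ⟨((n:ℝ)+1)^2, fun ω => pow_le_pow_left₀
        (mul_nonneg (hfac_nonneg _ _ (hV₂ ω) (u_pos n).le) (by positivity))
        (hfac_bd _ n (hV₂ ω)) 2⟩)
      (fun ω => by simpa using (hpt2 ω).pow 2) ?_
    have heq : ∀ n : ℕ, ∫ ω, ((1 - Real.exp (-(u n * V₂ ω))) * ((n:ℝ)+1)) ^ 2 ∂μ
        = (1 - 2*F2 (u n) + K2 (u n)) * ((n:ℝ)+1)^2 := by
      intro n
      have hptw : ∀ ω, ((1 - Real.exp (-(u n * V₂ ω))) * ((n:ℝ)+1)) ^ 2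
          = (1 - 2*Real.exp (-(u n * V₂ ω)) + Real.exp (-(2 * u n * V₂ ω))) * ((n:ℝ)+1)^2 := by
        intro ω
        have e2 : Real.exp (-(u n * V₂ ω)) ^ 2 = Real.exp (-(2 * u n * V₂ ω)) := by
          rw [sq, ← Real.exp_add]; congr 1; ring
        linear_combination (((n:ℝ)+1)^2) * e2
      simp_rw [hptw]
      rw [integral_mul_const]
      congr 1
      have i2 : Integrable (fun ω => 2 * Real.exp (-(u n * V₂ ω))) μ :=
        (iexp2 _ (u_pos n).le).const_mul 2
      have i3 : Integrable (fun ω => 1 - 2 * Real.exp (-(u n * V₂ ω))) μ :=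
        (integrable_const 1).sub i2
      have i4 : Integrable (fun ω => Real.exp (-(2 * u n * V₂ ω))) μ :=
        iexp2 (2 * u n) (by have := u_pos n; positivity)
      rw [integral_add i3 i4, integral_sub (integrable_const 1) i2,
        integral_const_mul, hB _ (u_pos n).le, hB2 _ (u_pos n).le]
      simp
    have hG : ∀ t ∈ Set.Ioo (-(1:ℝ)/8) (1/8),
        HasDerivAt (fun t => 1 - 2*F2 t + K2 t) (0 - 2*F2' t + K2' t) t :=
      fun t ht => ((hasDerivAt_const t 1).sub ((hdF2 ht).const_mul 2)).add (hdK2 ht)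
    have hG'' : HasDerivAt (fun t => 0 - 2*F2' t + K2' t) (198:ℝ) 0 := by
      have := ((hasDerivAt_const (0:ℝ) 0).sub (hdF2'.const_mul 2)).add hdK2'
      refine this.congr_deriv ?_
      norm_num
    have hlim := second_lim hG (by norm_num [F2_0, K2_0]) (by norm_num [F2'_0, K2'_0]) hG''
    rw [show (198:ℝ)/2 = 99 by norm_num] at hlim
    exact hlim.congr fun n => (heq n).symm
  -- Mixed moment
  have hM5 : ∫ ω, V₁ ω * V₂ ω ∂μ = 72 + 2 * ∑ j, ρ j ^ 2 := by
    refine key μ (fun n ω => ((1 - Real.exp (-(u n * V₁ ω))) * ((n:ℝ)+1))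
        * ((1 - Real.exp (-(u n * V₂ ω))) * ((n:ℝ)+1)))
      (fun ω => V₁ ω * V₂ ω) (72 + 2 * ∑ j, ρ j ^ 2)
      (fun n => ((measurable_const.sub (mexp1 (u n))).mul_const _).mul
        ((measurable_const.sub (mexp2 (u n))).mul_const _))
      (hV₁m.mul hV₂m)
      (fun n ω => mul_nonneg
        (mul_nonneg (hfac_nonneg _ _ (hV₁ ω) (u_pos n).le) (by positivity))
        (mul_nonneg (hfac_nonneg _ _ (hV₂ ω) (u_pos n).le) (by positivity)))
      (fun n ω => mul_le_mul (hfac_le _ n (hV₁ ω)) (hfac_le _ n (hV₂ ω))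
        (mul_nonneg (hfac_nonneg _ _ (hV₂ ω) (u_pos n).le) (by positivity)) (hV₁ ω))
      (fun n => ⟨((n:ℝ)+1) * ((n:ℝ)+1), fun ω => mul_le_mul
        (hfac_bd _ n (hV₁ ω)) (hfac_bd _ n (hV₂ ω))
        (mul_nonneg (hfac_nonneg _ _ (hV₂ ω) (u_pos n).le) (by positivity))
        (by positivity)⟩)
      (fun ω => (hpt1 ω).mul (hpt2 ω)) ?_
    have heq : ∀ n : ℕ, ∫ ω, ((1 - Real.exp (-(u n * V₁ ω))) * ((n:ℝ)+1))
        * ((1 - Real.exp (-(u n * V₂ ω))) * ((n:ℝ)+1)) ∂μ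
        = (1 - F1 (u n) - F2 (u n) + F3 (fun j => 1 - ρ j ^ 2) (u n)) * ((n:ℝ)+1)^2 := by
      intro n
      have hptw : ∀ ω, ((1 - Real.exp (-(u n * V₁ ω))) * ((n:ℝ)+1))
          * ((1 - Real.exp (-(u n * V₂ ω))) * ((n:ℝ)+1))
          = (1 - Real.exp (-(u n * V₁ ω)) - Real.exp (-(u n * V₂ ω))
              + Real.exp (-(u n * V₁ ω)) * Real.exp (-(u n * V₂ ω))) * ((n:ℝ)+1)^2 := by
        intro ω; ring
      simp_rw [hptw]
      rw [integral_mul_const]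
      congr 1
      have i1 : Integrable (fun ω => Real.exp (-(u n * V₁ ω))) μ := iexp1 _ (u_pos n).le
      have i2 : Integrable (fun ω => Real.exp (-(u n * V₂ ω))) μ := iexp2 _ (u_pos n).le
      have i3 : Integrable (fun ω => 1 - Real.exp (-(u n * V₁ ω))) μ :=
        (integrable_const 1).sub i1
      have i4 : Integrable (fun ω => 1 - Real.exp (-(u n * V₁ ω)) - Real.exp (-(u n * V₂ ω))) μ :=
        i3.sub i2
      have i5 : Integrable (fun ω => Real.exp (-(u n * V₁ ω)) * Real.exp (-(u n * V₂ ω))) μ :=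
        iexp12 _ (u_pos n).le
      rw [integral_add i4 i5, integral_sub i3 i2, integral_sub (integrable_const 1) i1,
        hA _ (u_pos n).le, hB _ (u_pos n).le, hC _ (u_pos n).le]
      simp
    have hsum : ∑ j : Fin 8, (1 - ρ j ^ 2) = 8 - ∑ j : Fin 8, ρ j ^ 2 := by
      rw [Finset.sum_sub_distrib]
      simp
    have hG : ∀ t ∈ Set.Ioo (-(1:ℝ)/8) (1/8),
        HasDerivAt (fun t => 1 - F1 t - F2 t + F3 (fun j => 1 - ρ j ^ 2) t)
          (0 - F1' t - F2' t + F3' (fun j => 1 - ρ j ^ 2) t) t :=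
      fun t ht => (((hasDerivAt_const t 1).sub (hdF1 ht)).sub (hdF2 ht)).add (hdF3 ha0 ht)
    have hG'' : HasDerivAt (fun t => 0 - F1' t - F2' t + F3' (fun j => 1 - ρ j ^ 2) t)
        (144 + 4 * ∑ j, ρ j ^ 2) 0 := by
      have := (((hasDerivAt_const (0:ℝ) 0).sub hdF1').sub hdF2').add
        (hdF3' (fun j => 1 - ρ j ^ 2) ha0)
      refine this.congr_deriv ?_
      rw [hsum]
      ring
    have hlim := second_lim hG (by norm_num [F1_0, F2_0, F3_0])
      (by norm_num [F1'_0, F2'_0, F3'_0]) hG''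
    rw [show (144 + 4 * ∑ j, ρ j ^ 2)/2 = 72 + 2 * ∑ j, ρ j ^ 2 by ring] at hlim
    exact hlim.congr fun n => (heq n).symm
  -- conclusion
  refine ⟨hM5, ?_⟩
  rw [hM5, hM1, hM2, hM3, hM4]
  have hs2 : Real.sqrt 2 * Real.sqrt 2 = 2 := Real.mul_self_sqrt (by norm_num)
  have hs2pos : 0 < Real.sqrt 2 := Real.sqrt_pos.mpr (by norm_num)
  have hsq : Real.sqrt ((80 - (8:ℝ)^2) * (99 - (9:ℝ)^2)) = 12 * Real.sqrt 2 := by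
    rw [show ((80:ℝ) - 8^2) * (99 - 9^2) = 12^2 * 2 by norm_num,
      Real.sqrt_mul (by positivity), Real.sqrt_sq (by norm_num)]
  rw [hsq]
  rw [div_eq_iff (by positivity)]
  linear_combination (-(∑ j, ρ j ^ 2)) * hs2
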